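/- In Cl(15,0), the identity e_{89ABCDEF}·Φ_O = Φ_P holds, where Φ_O = e_{12389AB} + e_{14589CD} + e_{16789EF} + e_{2468ACE} + e_{2578ADF} + e_{3478BCF} + e_{3568BDE} and Φ_P = e_{123CDEF} + e_{145ABEF} + e_{167ABCD} + e_{2469BDF} + e_{2579BCE} + e_{3479ADE} + e_{3569ACF}. -/
import Mathlib


noncomputable def Q15 : QuadraticForm ℝ (Fin 15 → ℝ) :=
  QuadraticMap.weightedSumSquares ℝ (fun _ : Fin 15 => (1 : ℝ))

noncomputable def e15 (i : Fin 15) : CliffordAlgebra Q15 :=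
  CliffordAlgebra.ι Q15 (Pi.single i 1)

/-- Product of generators with the given (0-based) indices;
hexadecimal index k of the paper corresponds to k-1 here. -/
noncomputable def p15 (l : List (Fin 15)) : CliffordAlgebra Q15 := (l.map e15).prod

/-- Φ_A = e1234567. -/
noncomputable def ΦA : CliffordAlgebra Q15 := p15 [0,1,2,3,4,5,6]

/-- Φ_O = e_{12389AB} + e_{14589CD} + e_{16789EF} + e_{2468ACE} + e_{2578ADF}
  + e_{3478BCF} + e_{3568BDE}. -/
noncomputable def ΦO : CliffordAlgebra Q15 :=
  p15 [0,1,2,7,8,9,10] + p15 [0,3,4,7,8,11,12] + p15 [0,5,6,7,8,13,14]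
    + p15 [1,3,5,7,9,11,13] + p15 [1,4,6,7,9,12,14] + p15 [2,3,6,7,10,11,14]
    + p15 [2,4,5,7,10,12,13]

/-- Φ_P = e_{123CDEF} + e_{145ABEF} + e_{167ABCD} + e_{2469BDF} + e_{2579BCE}
  + e_{3479ADE} + e_{3569ACF}. -/
noncomputable def ΦP : CliffordAlgebra Q15 :=
  p15 [0,1,2,11,12,13,14] + p15 [0,3,4,9,10,13,14] + p15 [0,5,6,9,10,11,12]
    + p15 [1,3,5,8,10,12,14] + p15 [1,4,6,8,10,11,13] + p15 [2,3,6,8,9,12,13]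
    + p15 [2,4,5,8,9,11,14]

/-- The pseudoscalar e_{123456789ABCDEF}. -/
noncomputable def ω15 : CliffordAlgebra Q15 :=
  p15 [0,1,2,3,4,5,6,7,8,9,10,11,12,13,14]

lemma Q15_single (i : Fin 15) : Q15 (Pi.single i 1) = 1 := by
  simp [Q15, QuadraticMap.weightedSumSquares_apply]
  rw [Finset.sum_eq_single i] <;> simp +contextual [Pi.single_apply]

lemma e_sq (i : Fin 15) : e15 i * e15 i = 1 := by
  rw [e15, CliffordAlgebra.ι_sq_scalar, Q15_single, map_one]

lemma polar15 (i j : Fin 15) (h : i ≠ j) :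
    QuadraticMap.polar Q15 (Pi.single i 1) (Pi.single j 1) = 0 := by
  simp [QuadraticMap.polar, Q15, QuadraticMap.weightedSumSquares_apply, Pi.single_apply]
  have : ∑ x : Fin 15,
      (((if x = i then (1:ℝ) else 0) + if x = j then 1 else 0)
        * ((if x = i then (1:ℝ) else 0) + if x = j then 1 else 0))
      = ∑ x : Fin 15, ((if x = i then (1:ℝ) else 0) + if x = j then 1 else 0) := by
    apply Finset.sum_congr rfl
    intro x _
    by_cases h1 : x = i <;> by_cases h2 : x = j <;> simp_all
  rw [this, Finset.sum_add_distrib]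
  simp

lemma e_swap (i j : Fin 15) (h : j < i) : e15 i * e15 j = -(e15 j * e15 i) := by
  have := CliffordAlgebra.ι_mul_ι_add_swap (Q := Q15) (Pi.single i 1) (Pi.single j 1)
  rw [polar15 i j (Fin.ne_of_gt h), map_zero] at this
  exact eq_neg_of_add_eq_zero_left this

lemma e_sq' (i : Fin 15) (x : CliffordAlgebra Q15) : e15 i * (e15 i * x) = x := by
  rw [← mul_assoc, e_sq, one_mul]

lemma e_swap' (i j : Fin 15) (x : CliffordAlgebra Q15) (h : j < i) :
    e15 i * (e15 j * x) = -(e15 j * (e15 i * x)) := by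
  rw [← mul_assoc, e_swap i j h, neg_mul, mul_assoc]

set_option maxHeartbeats 4000000 in
theorem stmt18 : p15 [7,8,9,10,11,12,13,14] * ΦO = ΦP := by
  simp only [ΦO, ΦP, p15, List.map_cons, List.map_nil, List.prod_cons, List.prod_nil,
    mul_one, mul_add, mul_assoc]
  simp (config := { decide := true }) only [e_sq', e_swap', e_sq, e_swap, mul_neg, neg_neg,
    neg_mul, neg_add_rev, mul_one]
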